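/- Let H be an ℓ-bounded set system with VC-dimension at most 1. If |H| > (r-1)^ℓ, then H contains an r-sunflower. -/

import Mathlib

/-- A family of `r` distinct sets is an `r`-sunflower if all pairwise
intersections of distinct members coincide. -/
def IsSunflower {α : Type*} [DecidableEq α] (r : ℕ) (P : Finset (Finset α)) : Prop :=
  P.card = r ∧ ∀ A ∈ P, ∀ B ∈ P, ∀ A' ∈ P, ∀ B' ∈ P,
    A ≠ B → A' ≠ B' → A ∩ B = A' ∩ B'

/-- `H` contains an `r`-sunflower. -/
def HasSunflower {α : Type*} [DecidableEq α] (H : Finset (Finset α)) (r : ℕ) : Prop :=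
  ∃ P ⊆ H, IsSunflower r P

/-- `H` shatters `T` if every subset of `T` is the trace of a member of `H`. -/
def Shatters {α : Type*} [DecidableEq α] (H : Finset (Finset α)) (T : Finset α) : Prop :=
  ∀ A ⊆ T, ∃ S ∈ H, T ∩ S = A

/-- The VC-dimension of `H` is at most `d`: every shattered set is of size at most `d`. -/
def VCdimLE {α : Type*} [DecidableEq α] (H : Finset (Finset α)) (d : ℕ) : Prop :=
  ∀ T : Finset α, Shatters H T → T.card ≤ d

section Aux

variable {α : Type*} [DecidableEq α]

/-- classification of subsets of a pair -/
lemma aux_subset_pair {y z : α} {A : Finset α} (h : A ⊆ {y, z}) :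
    A = ∅ ∨ A = {y} ∨ A = {z} ∨ A = {y, z} := by
  by_cases hy : y ∈ A <;> by_cases hz : z ∈ A
  · right; right; right
    refine Finset.Subset.antisymm h ?_
    intro a ha
    simp only [Finset.mem_insert, Finset.mem_singleton] at ha
    rcases ha with rfl | rfl <;> assumption
  · right; left
    refine Finset.Subset.antisymm ?_ (by simp [hy])
    intro a ha
    have := h ha
    simp only [Finset.mem_insert, Finset.mem_singleton] at this ⊢
    rcases this with rfl | rfl
    · rfl
    · exact absurd ha hz
  · right; right; left
    refine Finset.Subset.antisymm ?_ (by simp [hz])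
    intro a ha
    have := h ha
    simp only [Finset.mem_insert, Finset.mem_singleton] at this ⊢
    rcases this with rfl | rfl
    · exact absurd ha hy
    · rfl
  · left
    rw [Finset.eq_empty_iff_forall_notMem]
    intro a ha
    have := h ha
    simp only [Finset.mem_insert, Finset.mem_singleton] at this
    rcases this with rfl | rfl <;> contradiction

/-- A pairwise disjoint subfamily of size at least `r` yields an `r`-sunflower. -/
lemma aux_sunflower_of_disjoint {H D : Finset (Finset α)} {r : ℕ} (hDH : D ⊆ H)
    (hdisj : ∀ A ∈ D, ∀ B ∈ D, A ≠ B → A ∩ B = ∅) (hr : r ≤ D.card) :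
    HasSunflower H r := by
  obtain ⟨P, hPD, hPcard⟩ := Finset.exists_subset_card_eq hr
  refine ⟨P, hPD.trans hDH, hPcard, ?_⟩
  intro A hA B hB A' hA' B' hB' hAB hA'B'
  rw [hdisj A (hPD hA) B (hPD hB) hAB, hdisj A' (hPD hA') B' (hPD hB') hA'B']

/-- The chain lemma: if some member `W` of `H` is disjoint from `A ∈ H`, then (by VC ≤ 1)
the traces of members of `H` on `A` form a chain. -/
lemma aux_chain {H : Finset (Finset α)} (hVC : VCdimLE H 1) {A W : Finset α}
    (hA : A ∈ H) (hW : W ∈ H) (hdisj : W ∩ A = ∅) {S S' : Finset α}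
    (hS : S ∈ H) (hS' : S' ∈ H) :
    S ∩ A ⊆ S' ∩ A ∨ S' ∩ A ⊆ S ∩ A := by
  by_contra hc
  push_neg at hc
  obtain ⟨h1, h2⟩ := hc
  obtain ⟨y, hy, hy'⟩ := Finset.not_subset.1 h1
  obtain ⟨z, hz, hz'⟩ := Finset.not_subset.1 h2
  have hyA : y ∈ A := (Finset.mem_inter.1 hy).2
  have hyS : y ∈ S := (Finset.mem_inter.1 hy).1
  have hzA : z ∈ A := (Finset.mem_inter.1 hz).2
  have hzS' : z ∈ S' := (Finset.mem_inter.1 hz).1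
  have hyS' : y ∉ S' := fun h => hy' (Finset.mem_inter.2 ⟨h, hyA⟩)
  have hzS : z ∉ S := fun h => hz' (Finset.mem_inter.2 ⟨h, hzA⟩)
  have hne : y ≠ z := fun h => hyS' (h ▸ hzS')
  have hWA : ∀ a ∈ W, a ∉ A := by
    intro a h1' h2'
    have : a ∈ W ∩ A := Finset.mem_inter.2 ⟨h1', h2'⟩
    rw [hdisj] at this
    exact absurd this (Finset.notMem_empty a)
  have hsh : Shatters H ({y, z} : Finset α) := by
    intro B hB
    rcases aux_subset_pair hB with rfl | rfl | rfl | rfl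
    · refine ⟨W, hW, ?_⟩
      rw [Finset.eq_empty_iff_forall_notMem]
      intro a ha
      obtain ⟨ha1, ha2⟩ := Finset.mem_inter.1 ha
      simp only [Finset.mem_insert, Finset.mem_singleton] at ha1
      rcases ha1 with rfl | rfl
      · exact hWA a ha2 hyA
      · exact hWA a ha2 hzA
    · refine ⟨S, hS, ?_⟩
      ext a
      simp only [Finset.mem_inter, Finset.mem_insert, Finset.mem_singleton]
      constructor
      · rintro ⟨rfl | rfl, haS⟩
        · rfl
        · exact absurd haS hzS
      · rintro rfl
        exact ⟨Or.inl rfl, hyS⟩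
    · refine ⟨S', hS', ?_⟩
      ext a
      simp only [Finset.mem_inter, Finset.mem_insert, Finset.mem_singleton]
      constructor
      · rintro ⟨rfl | rfl, haS⟩
        · exact absurd haS hyS'
        · rfl
      · rintro rfl
        exact ⟨Or.inr rfl, hzS'⟩
    · refine ⟨A, hA, ?_⟩
      rw [Finset.inter_eq_left]
      intro a ha
      simp only [Finset.mem_insert, Finset.mem_singleton] at ha
      rcases ha with rfl | rfl <;> assumption
  have := hVC _ hsh
  rw [Finset.card_pair hne] at this
  omega

/-- From a chain of traces on `A`, find a common element of all members meeting `A`. -/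
lemma aux_common_of_chain {H : Finset (Finset α)} {A : Finset α} (hA : A ∈ H)
    (hAne : A.Nonempty)
    (hchain : ∀ S ∈ H, ∀ S' ∈ H, S ∩ A ⊆ S' ∩ A ∨ S' ∩ A ⊆ S ∩ A) :
    ∃ x, ∀ S ∈ H, (S ∩ A).Nonempty → x ∈ S := by
  classical
  set F := H.filter (fun S => (S ∩ A).Nonempty) with hF
  have hAF : A ∈ F := by
    rw [hF, Finset.mem_filter]
    exact ⟨hA, by simpa using hAne⟩
  obtain ⟨S₀, hS₀F, hmin⟩ := F.exists_min_image (fun S => (S ∩ A).card) ⟨A, hAF⟩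
  have hS₀H : S₀ ∈ H := (Finset.mem_filter.1 hS₀F).1
  have hS₀ne : (S₀ ∩ A).Nonempty := (Finset.mem_filter.1 hS₀F).2
  obtain ⟨x, hx⟩ := hS₀ne
  refine ⟨x, fun S hS hSne => ?_⟩
  have hSF : S ∈ F := Finset.mem_filter.2 ⟨hS, hSne⟩
  have hsub : S₀ ∩ A ⊆ S ∩ A := by
    rcases hchain S₀ hS₀H S hS with h | h
    · exact h
    · have := hmin S hSF
      rw [Finset.eq_of_subset_of_card_le h this]
  exact (Finset.mem_inter.1 (hsub hx)).1

/-- t = 1 case: if every member of `H` meets `A ∈ H`, there is a hitting set of size ≤ 2. -/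
lemma aux_hitting_of_all_meet {H : Finset (Finset α)} (hVC : VCdimLE H 1) {A : Finset α}
    (hA : A ∈ H) (hAne : A.Nonempty) (hmeet : ∀ S ∈ H, (S ∩ A).Nonempty) :
    ∃ X : Finset α, X.card ≤ 2 ∧ ∀ S ∈ H, ∃ x ∈ X, x ∈ S := by
  classical
  by_cases hchain : ∀ S ∈ H, ∀ S' ∈ H, S ∩ A ⊆ S' ∩ A ∨ S' ∩ A ⊆ S ∩ A
  · obtain ⟨x, hx⟩ := aux_common_of_chain hA hAne hchain
    exact ⟨{x}, by simp, fun S hS => ⟨x, Finset.mem_singleton_self x, hx S hS (hmeet S hS)⟩⟩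
  · push_neg at hchain
    obtain ⟨S, hS, S', hS', h1, h2⟩ := hchain
    obtain ⟨y, hy, hy'⟩ := Finset.not_subset.1 h1
    obtain ⟨z, hz, hz'⟩ := Finset.not_subset.1 h2
    have hyA : y ∈ A := (Finset.mem_inter.1 hy).2
    have hyS : y ∈ S := (Finset.mem_inter.1 hy).1
    have hzA : z ∈ A := (Finset.mem_inter.1 hz).2
    have hzS' : z ∈ S' := (Finset.mem_inter.1 hz).1
    have hyS' : y ∉ S' := fun h => hy' (Finset.mem_inter.2 ⟨h, hyA⟩)
    have hzS : z ∉ S := fun h => hz' (Finset.mem_inter.2 ⟨h, hzA⟩)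
    have hne : y ≠ z := fun h => hyS' (h ▸ hzS')
    by_cases hw : ∃ W ∈ H, y ∉ W ∧ z ∉ W
    · exfalso
      obtain ⟨W, hW, hWy, hWz⟩ := hw
      have hsh : Shatters H ({y, z} : Finset α) := by
        intro B hB
        rcases aux_subset_pair hB with rfl | rfl | rfl | rfl
        · refine ⟨W, hW, ?_⟩
          rw [Finset.eq_empty_iff_forall_notMem]
          intro a ha
          obtain ⟨ha1, ha2⟩ := Finset.mem_inter.1 ha
          simp only [Finset.mem_insert, Finset.mem_singleton] at ha1
          rcases ha1 with rfl | rfl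
          · exact hWy ha2
          · exact hWz ha2
        · refine ⟨S, hS, ?_⟩
          ext a
          simp only [Finset.mem_inter, Finset.mem_insert, Finset.mem_singleton]
          constructor
          · rintro ⟨rfl | rfl, haS⟩
            · rfl
            · exact absurd haS hzS
          · rintro rfl
            exact ⟨Or.inl rfl, hyS⟩
        · refine ⟨S', hS', ?_⟩
          ext a
          simp only [Finset.mem_inter, Finset.mem_insert, Finset.mem_singleton]
          constructor
          · rintro ⟨rfl | rfl, haS⟩
            · exact absurd haS hyS'
            · rfl
          · rintro rfl
            exact ⟨Or.inr rfl, hzS'⟩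
        · refine ⟨A, hA, ?_⟩
          rw [Finset.inter_eq_left]
          intro a ha
          simp only [Finset.mem_insert, Finset.mem_singleton] at ha
          rcases ha with rfl | rfl <;> assumption
      have := hVC _ hsh
      rw [Finset.card_pair hne] at this
      omega
    · push_neg at hw
      refine ⟨{y, z}, Finset.card_insert_le _ _ |>.trans (by simp), fun W hW => ?_⟩
      by_cases hyW : y ∈ W
      · exact ⟨y, by simp, hyW⟩
      · exact ⟨z, by simp, hw W hW hyW⟩

/-- counting via a hitting set -/
lemma aux_count {H : Finset (Finset α)} {X : Finset α} {m : ℕ}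
    (hdeg : ∀ x, (H.filter (fun S => x ∈ S)).card ≤ m)
    (hhit : ∀ S ∈ H, ∃ x ∈ X, x ∈ S) : H.card ≤ X.card * m := by
  classical
  have hsub : H ⊆ X.biUnion (fun x => H.filter (fun S => x ∈ S)) := by
    intro S hS
    obtain ⟨x, hx, hxS⟩ := hhit S hS
    exact Finset.mem_biUnion.2 ⟨x, hx, Finset.mem_filter.2 ⟨hS, hxS⟩⟩
  calc H.card ≤ (X.biUnion (fun x => H.filter (fun S => x ∈ S))).card :=
        Finset.card_le_card hsub
    _ ≤ ∑ x ∈ X, (H.filter (fun S => x ∈ S)).card := Finset.card_biUnion_le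
    _ ≤ X.card * m := by
        have := Finset.sum_le_card_nsmul X (fun x => (H.filter (fun S => x ∈ S)).card) m
          (fun x _ => hdeg x)
        simpa [smul_eq_mul] using this

end Aux

/-- An `ℓ`-bounded set system of VC-dimension at most 1 with more than `(r-1)^ℓ`
members contains an `r`-sunflower. -/
theorem stmt3 {α : Type*} [DecidableEq α] (H : Finset (Finset α)) (ℓ r : ℕ)
    (hb : ∀ S ∈ H, S.card ≤ ℓ) (hVC : VCdimLE H 1)
    (hcard : (r - 1) ^ ℓ < H.card) :
    HasSunflower H r := by
  classical
  induction ℓ generalizing H with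
  | zero =>
    exfalso
    have hsub : H ⊆ {∅} := by
      intro S hS
      have := hb S hS
      simp only [Nat.le_zero, Finset.card_eq_zero] at this
      simp [this]
    have := Finset.card_le_card hsub
    simp only [Finset.card_singleton] at this
    simp only [pow_zero] at hcard
    omega
  | succ ℓ ih =>
    -- small r
    rcases Nat.lt_or_ge r 3 with hr | hr
    · interval_cases r
      · -- r = 0
        refine ⟨∅, Finset.empty_subset _, by simp, ?_⟩
        intro A hA
        exact absurd hA (Finset.notMem_empty A)
      · -- r = 1 : any singleton
        have hne : H.Nonempty := Finset.card_pos.1 (by omega)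
        obtain ⟨S, hS⟩ := hne
        refine ⟨{S}, by simp [hS], by simp, ?_⟩
        intro A hA B hB A' hA' B' hB' hAB _
        simp only [Finset.mem_singleton] at hA hB
        exact absurd (hA.trans hB.symm) hAB
      · -- r = 2 : any two distinct sets
        have h2 : 1 < H.card := by simpa using hcard
        obtain ⟨A, hA, B, hB, hne⟩ := Finset.one_lt_card.1 h2
        have key : ∀ X ∈ ({A, B} : Finset (Finset α)), ∀ Y ∈ ({A, B} : Finset (Finset α)),
            X ≠ Y → X ∩ Y = A ∩ B := by
          intro X hX Y hY hXY
          simp only [Finset.mem_insert, Finset.mem_singleton] at hX hY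
          rcases hX with rfl | rfl <;> rcases hY with rfl | rfl
          · exact absurd rfl hXY
          · rfl
          · exact Finset.inter_comm _ _
          · exact absurd rfl hXY
        refine ⟨{A, B}, ?_, Finset.card_pair hne, ?_⟩
        · intro X hX
          simp only [Finset.mem_insert, Finset.mem_singleton] at hX
          rcases hX with rfl | rfl <;> assumption
        · intro X hX Y hY X' hX' Y' hY' h h'
          rw [key X hX Y hY h, key X' hX' Y' hY' h']
    · -- main case: r ≥ 3
      obtain ⟨q, rfl⟩ : ∃ q, r = q + 1 := ⟨r - 1, by omega⟩
      have hq : 2 ≤ q := by omega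
      simp only [Nat.add_sub_cancel] at hcard ⊢
      set m : ℕ := q ^ ℓ with hm
      have hm1 : 1 ≤ m := Nat.one_le_iff_ne_zero.2 (pow_ne_zero _ (by omega))
      have hql : q ^ (ℓ + 1) = q * m := by rw [hm, pow_succ, mul_comm]
      by_cases hx : ∃ x, m < (H.filter (fun S => x ∈ S)).card
      · -- high-degree element: recurse on the link
        obtain ⟨x, hx⟩ := hx
        set L : Finset (Finset α) :=
          (H.filter (fun S => x ∈ S)).image (fun S => S.erase x) with hL
        have hmemL : ∀ T ∈ L, ∃ S ∈ H, x ∈ S ∧ S.erase x = T := by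
          intro T hT
          obtain ⟨S, hS, rfl⟩ := Finset.mem_image.1 hT
          obtain ⟨hS1, hS2⟩ := Finset.mem_filter.1 hS
          exact ⟨S, hS1, hS2, rfl⟩
        have hxL : ∀ T ∈ L, x ∉ T := by
          intro T hT
          obtain ⟨S, _, _, rfl⟩ := hmemL T hT
          exact Finset.notMem_erase x S
        have hLcard : L.card = (H.filter (fun S => x ∈ S)).card := by
          rw [hL]
          apply Finset.card_image_of_injOn
          intro S1 h1 S2 h2 he
          have hx1 : x ∈ S1 := (Finset.mem_filter.1 h1).2
          have hx2 : x ∈ S2 := (Finset.mem_filter.1 h2).2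
          rw [← Finset.insert_erase hx1, ← Finset.insert_erase hx2]
          exact congrArg (insert x) he
        have hLb : ∀ T ∈ L, T.card ≤ ℓ := by
          intro T hT
          obtain ⟨S, hS, hxS, rfl⟩ := hmemL T hT
          rw [Finset.card_erase_of_mem hxS]
          have := hb S hS
          omega
        have hLVC : VCdimLE L 1 := by
          intro T hsh
          have hxT : x ∉ T := by
            intro hxT
            obtain ⟨S', hS'L, hTS'⟩ := hsh T (Finset.Subset.refl T)
            have : x ∈ T ∩ S' := by rw [hTS']; exact hxT
            exact hxL S' hS'L (Finset.mem_inter.1 this).2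
          apply hVC
          intro B hB
          obtain ⟨S', hS'L, hTS'⟩ := hsh B hB
          obtain ⟨S, hS, hxS, rfl⟩ := hmemL S' hS'L
          refine ⟨S, hS, ?_⟩
          rw [← hTS']
          ext a
          simp only [Finset.mem_inter, Finset.mem_erase]
          constructor
          · rintro ⟨h1, h2⟩
            exact ⟨h1, fun he => hxT (he ▸ h1), h2⟩
          · rintro ⟨h1, _, h3⟩
            exact ⟨h1, h3⟩
        have hLcard' : q ^ ℓ < L.card := by rw [hLcard]; exact hx
        obtain ⟨P', hP'L, hP'card, hP'sun⟩ := ih L hLb hLVC (by simpa using hLcard')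
        -- lift the sunflower by inserting x
        have hxP' : ∀ A ∈ P', x ∉ A := fun A hA => hxL A (hP'L hA)
        have hins : ∀ a b : Finset α, insert x a ∩ insert x b = insert x (a ∩ b) := by
          intro a b
          ext t
          simp only [Finset.mem_inter, Finset.mem_insert]
          tauto
        refine ⟨P'.image (fun A => insert x A), ?_, ?_, ?_⟩
        · intro T hT
          obtain ⟨A, hA, rfl⟩ := Finset.mem_image.1 hT
          obtain ⟨S, hS, hxS, rfl⟩ := hmemL A (hP'L hA)
          rwa [Finset.insert_erase hxS]
        · rw [Finset.card_image_of_injOn, hP'card]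
          intro a ha b hb he
          have : (insert x a).erase x = (insert x b).erase x :=
            congrArg (fun s => s.erase x) he
          rwa [Finset.erase_insert (hxP' a ha), Finset.erase_insert (hxP' b hb)] at this
        · intro A hA B hB A' hA' B' hB' hAB hA'B'
          obtain ⟨a, ha, rfl⟩ := Finset.mem_image.1 hA
          obtain ⟨b, hb, rfl⟩ := Finset.mem_image.1 hB
          obtain ⟨a', ha', rfl⟩ := Finset.mem_image.1 hA'
          obtain ⟨b', hb', rfl⟩ := Finset.mem_image.1 hB'
          have hab : a ≠ b := fun h => hAB (h ▸ rfl)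
          have hab' : a' ≠ b' := fun h => hA'B' (h ▸ rfl)
          rw [hins, hins, hP'sun a ha b hb a' ha' b' hb' hab hab']
      · -- no high-degree element
        push_neg at hx
        by_contra hno
        -- no q+1 pairwise disjoint sets
        have hnod : ∀ D ⊆ H, (∀ A ∈ D, ∀ B ∈ D, A ≠ B → A ∩ B = ∅) → D.card ≤ q := by
          intro D hD hd
          by_contra hc
          exact hno (aux_sunflower_of_disjoint hD hd (by omega))
        -- a maximum pairwise disjoint subfamily
        have hHne : H.Nonempty := Finset.card_pos.1 (by omega)
        obtain ⟨S₀, hS₀⟩ := hHne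
        set 𝒟 : Finset (Finset (Finset α)) :=
          H.powerset.filter (fun D => ∀ A ∈ D, ∀ B ∈ D, A ≠ B → A ∩ B = ∅) with h𝒟
        have hS₀𝒟 : ({S₀} : Finset (Finset α)) ∈ 𝒟 := by
          rw [h𝒟, Finset.mem_filter, Finset.mem_powerset]
          refine ⟨by simp [hS₀], ?_⟩
          intro A hA B hB hAB
          simp only [Finset.mem_singleton] at hA hB
          exact absurd (hA.trans hB.symm) hAB
        obtain ⟨D, hD𝒟, hDmax⟩ := 𝒟.exists_max_image Finset.card ⟨_, hS₀𝒟⟩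
        have hDH : D ⊆ H := Finset.mem_powerset.1 (Finset.mem_filter.1 hD𝒟).1
        have hDdisj : ∀ A ∈ D, ∀ B ∈ D, A ≠ B → A ∩ B = ∅ := (Finset.mem_filter.1 hD𝒟).2
        have ht1 : 1 ≤ D.card := by
          have := hDmax _ hS₀𝒟
          simpa using this
        have htq : D.card ≤ q := hnod D hDH hDdisj
        -- maximality: every nonempty member meets some member of D
        have hmeets : ∀ S ∈ H, S = ∅ ∨ ∃ A ∈ D, (S ∩ A).Nonempty := by
          intro S hS
          by_contra hcon
          push_neg at hcon
          obtain ⟨hSne, hSdisj⟩ := hcon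
          have hSdisj' : ∀ A ∈ D, S ∩ A = ∅ :=
            fun A hA => hSdisj A hA
          have hSD : S ∉ D := by
            intro h
            have := hSdisj' S h
            rw [Finset.inter_self] at this
            exact hSne.ne_empty this
          have hins : insert S D ∈ 𝒟 := by
            rw [h𝒟, Finset.mem_filter, Finset.mem_powerset]
            refine ⟨Finset.insert_subset hS hDH, ?_⟩
            intro A hA B hB hAB
            rcases Finset.mem_insert.1 hA with rfl | hA' <;>
              rcases Finset.mem_insert.1 hB with rfl | hB'
            · exact absurd rfl hAB
            · exact hSdisj' B hB'
            · rw [Finset.inter_comm]; exact hSdisj' A hA'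
            · exact hDdisj A hA' B hB' hAB
          have := hDmax _ hins
          rw [Finset.card_insert_of_notMem hSD] at this
          omega
        -- if ∅ ∈ H then ∅ ∈ D
        have hempty : ∅ ∈ H → ∅ ∈ D := by
          intro he
          by_contra hc
          have hins : insert ∅ D ∈ 𝒟 := by
            rw [h𝒟, Finset.mem_filter, Finset.mem_powerset]
            refine ⟨Finset.insert_subset he hDH, ?_⟩
            intro A hA B hB hAB
            rcases Finset.mem_insert.1 hA with rfl | hA' <;>
              rcases Finset.mem_insert.1 hB with rfl | hB'
            · exact absurd rfl hAB
            · exact Finset.empty_inter B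
            · exact Finset.inter_empty A
            · exact hDdisj A hA' B hB' hAB
          have := hDmax _ hins
          rw [Finset.card_insert_of_notMem hc] at this
          omega
        rcases eq_or_lt_of_le ht1 with ht1' | ht2
        · -- t = 1 : D = {A}
          obtain ⟨A, rfl⟩ := Finset.card_eq_one.1 ht1'.symm
          have hAH : A ∈ H := hDH (Finset.mem_singleton_self A)
          have hAne : A.Nonempty := by
            rw [Finset.nonempty_iff_ne_empty]
            rintro rfl
            -- then every member of H is empty, so |H| ≤ 1
            have hsub : H ⊆ {∅} := by
              intro S hS
              rcases hmeets S hS with rfl | ⟨B, hB, hBne⟩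
              · simp
              · simp only [Finset.mem_singleton] at hB
                subst hB
                simp at hBne
            have hle := Finset.card_le_card hsub
            simp only [Finset.card_singleton] at hle
            have hqm1 : 1 ≤ q * m := Nat.mul_pos (by omega) hm1
            omega
          have hmeet : ∀ S ∈ H, (S ∩ A).Nonempty := by
            intro S hS
            rcases hmeets S hS with rfl | ⟨B, hB, hBne⟩
            · exfalso
              have hEmD := hempty hS
              simp only [Finset.mem_singleton] at hEmD
              exact Finset.nonempty_iff_ne_empty.1 hAne hEmD.symm
            · simp only [Finset.mem_singleton] at hB
              rwa [hB] at hBne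
          obtain ⟨X, hX2, hXhit⟩ := aux_hitting_of_all_meet hVC hAH hAne hmeet
          have hcount : H.card ≤ X.card * m := aux_count hx hXhit
          have : H.card ≤ 2 * m := le_trans hcount (Nat.mul_le_mul_right m hX2)
          have h2q : 2 * m ≤ q * m := Nat.mul_le_mul_right m hq
          omega
        · -- t ≥ 2
          have ht2' : 2 ≤ D.card := ht2
          set E : Finset (Finset α) := D.filter (fun A => A ≠ ∅) with hE
          have hwit : ∀ A ∈ E, ∃ x, ∀ S ∈ H, (S ∩ A).Nonempty → x ∈ S := by
            intro A hAE
            obtain ⟨hAD, hAne⟩ := Finset.mem_filter.1 hAE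
            obtain ⟨W, hWD, hWA⟩ := Finset.exists_mem_ne (by omega : 1 < D.card) A
            have hdisjWA : W ∩ A = ∅ := hDdisj W hWD A hAD hWA
            exact aux_common_of_chain (hDH hAD)
              (Finset.nonempty_iff_ne_empty.2 hAne)
              (fun S hS S' hS' => aux_chain hVC (hDH hAD) (hDH hWD) hdisjWA hS hS')
          set X : Finset α := E.attach.image (fun A => (hwit A.1 A.2).choose) with hXdef
          have hXcard : X.card ≤ E.card := by
            calc X.card ≤ E.attach.card := Finset.card_image_le
              _ = E.card := Finset.card_attach
          have hXhit : ∀ S ∈ H, S ≠ ∅ → ∃ x ∈ X, x ∈ S := by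
            intro S hS hSne
            rcases hmeets S hS with rfl | ⟨A, hAD, hmeetA⟩
            · exact absurd rfl hSne
            · have hAne : A ≠ ∅ := by
                obtain ⟨a, ha⟩ := hmeetA
                exact Finset.nonempty_iff_ne_empty.1 ⟨a, (Finset.mem_inter.1 ha).2⟩
              have hAE : A ∈ E := Finset.mem_filter.2 ⟨hAD, hAne⟩
              refine ⟨(hwit A hAE).choose, ?_, (hwit A hAE).choose_spec S hS hmeetA⟩
              rw [hXdef]
              exact Finset.mem_image.2 ⟨⟨A, hAE⟩, Finset.mem_attach _ _, rfl⟩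
          by_cases hEm : ∅ ∈ H
          · -- remove ∅ and count
            have hEmD : ∅ ∈ D := hempty hEm
            have hEsub : E ⊆ D.erase ∅ := by
              intro A hA
              obtain ⟨hAD, hAne⟩ := Finset.mem_filter.1 hA
              exact Finset.mem_erase.2 ⟨hAne, hAD⟩
            have hEcard : E.card ≤ D.card - 1 := by
              have := Finset.card_le_card hEsub
              rw [Finset.card_erase_of_mem hEmD] at this
              exact this
            set H' : Finset (Finset α) := H.erase ∅ with hH'
            have hdeg' : ∀ x, (H'.filter (fun S => x ∈ S)).card ≤ m := by
              intro x
              refine le_trans (Finset.card_le_card ?_) (hx x)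
              exact Finset.monotone_filter_left _ (Finset.erase_subset _ _)
            have hhit' : ∀ S ∈ H', ∃ x ∈ X, x ∈ S := by
              intro S hS
              obtain ⟨hSne, hSH⟩ := Finset.mem_erase.1 hS
              exact hXhit S hSH hSne
            have hcount : H'.card ≤ X.card * m := aux_count hdeg' hhit'
            have hH'card : H.card ≤ H'.card + 1 := by
              rw [hH', Finset.card_erase_of_mem hEm]
              omega
            have hXq : X.card ≤ q - 1 := le_trans hXcard (by omega)
            have : H.card ≤ (q - 1) * m + 1 :=
              le_trans hH'card (by
                have := le_trans hcount (Nat.mul_le_mul_right m hXq)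
                omega)
            have hqm : (q - 1) * m + m = q * m := by
              rw [Nat.sub_one_mul]
              have : m ≤ q * m := Nat.le_mul_of_pos_left m (by omega)
              omega
            omega
          · -- ∅ ∉ H : count directly
            have hhit' : ∀ S ∈ H, ∃ x ∈ X, x ∈ S := by
              intro S hS
              refine hXhit S hS ?_
              rintro rfl
              exact hEm hS
            have hcount : H.card ≤ X.card * m := aux_count hx hhit'
            have hXq : X.card ≤ q := le_trans hXcard (le_trans (Finset.card_le_card
              (Finset.filter_subset _ _)) htq)
            have : H.card ≤ q * m := le_trans hcount (Nat.mul_le_mul_right m hXq)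
            omega
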